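/- Let G be a finite tree with vertex set V and let J ⊆ V be a nonempty set of root nodes. Let P ⊆ ℝ^{V×J} be the polyhedron of all x : V × J → ℝ satisfying: x(v,j) ≥ 0 for all v ∈ V and j ∈ J; x(j,j) = 1 for all j ∈ J and x(j,j') = 0 for all distinct j, j' ∈ J; Σ_{j∈J} x(v,j) = 1 for every v ∈ V \ J; and, for every v ∈ V \ J and every j ∈ J, x(v,j) ≤ x(v',j), where v' is the vertex adjacent to v on the unique path in G from v to j. Then every extreme point of P (every point of P that is not the midpoint of two distinct points of P) has all coordinates in {0,1}; equivalently, P is the convex hull of its {0,1}-valued points. (Lemma 1: integrality of the tree-partitioning formulation.) -/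

import Mathlib

open SimpleGraph

set_option linter.unusedSectionVars false

namespace TPI

variable {V : Type*} [DecidableEq V] {G : SimpleGraph V}

/-- canonical path between two vertices of a connected graph -/
noncomputable def p0 (hc : G.Connected) (a b : V) : G.Walk a b :=
  ((Classical.choice (hc.preconnected a b) : G.Walk a b).toPath : G.Path a b).1

lemma p0_isPath (hc : G.Connected) (a b : V) : (p0 hc a b).IsPath :=
  ((Classical.choice (hc.preconnected a b) : G.Walk a b).toPath).2

/-- next vertex on the canonical path from a to b -/
noncomputable def nxt (hc : G.Connected) (a b : V) : V := (p0 hc a b).getVert 1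

lemma walk_eq_p0 (hc : G.Connected) (ha : G.IsAcyclic) {a b : V}
    (w : G.Walk a b) (hw : w.IsPath) : w = p0 hc a b := by
  have := ha.path_unique ⟨w, hw⟩ ⟨p0 hc a b, p0_isPath hc a b⟩
  exact congrArg Subtype.val this

lemma p0_self (hc : G.Connected) (ha : G.IsAcyclic) (a : V) :
    p0 hc a a = SimpleGraph.Walk.nil := (walk_eq_p0 hc ha _ SimpleGraph.Walk.IsPath.nil).symm

lemma walk_cases {a b : V} (w : G.Walk a b) (hw : w.IsPath) (hab : a ≠ b) :
    ∃ (h : G.Adj a (w.getVert 1)) (t : G.Walk (w.getVert 1) b), w = SimpleGraph.Walk.cons h t ∧ t.IsPath := by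
  cases w with
  | nil => exact absurd rfl hab
  | cons h t =>
    rw [SimpleGraph.Walk.getVert_cons_succ (n := 0), SimpleGraph.Walk.getVert_zero]
    exact ⟨h, t, rfl, ((SimpleGraph.Walk.cons_isPath_iff _ _).1 hw).1⟩

lemma p0_cons (hc : G.Connected) (ha : G.IsAcyclic) {a b : V} (hab : a ≠ b) :
    ∃ (h : G.Adj a (nxt hc a b)), p0 hc a b = SimpleGraph.Walk.cons h (p0 hc (nxt hc a b) b) := by
  obtain ⟨h, t, hw, ht⟩ := walk_cases (p0 hc a b) (p0_isPath hc a b) hab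
  exact ⟨h, by rw [hw]; exact congrArg (SimpleGraph.Walk.cons h) (walk_eq_p0 hc ha t ht)⟩

lemma adj_nxt (hc : G.Connected) (ha : G.IsAcyclic) {a b : V} (hab : a ≠ b) :
    G.Adj a (nxt hc a b) := (p0_cons hc ha hab).choose

lemma support_p0_eq (hc : G.Connected) (ha : G.IsAcyclic) {a b : V} (hab : a ≠ b) :
    (p0 hc a b).support = a :: (p0 hc (nxt hc a b) b).support := by
  obtain ⟨h, hw⟩ := p0_cons hc ha hab
  rw [hw, SimpleGraph.Walk.support_cons]

/-- T5: if b is adjacent to a and lies on the canonical path from a to c, it's the next vertex -/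
lemma nxt_eq_of_adj_mem_support (hc : G.Connected) (ha : G.IsAcyclic) {a b c : V}
    (hadj : G.Adj a b) (hmem : b ∈ (p0 hc a c).support) : nxt hc a c = b := by
  have hab : a ≠ b := hadj.ne
  by_cases hac : a = c
  · subst hac
    rw [p0_self hc ha] at hmem
    simp at hmem
    exact absurd hmem.symm hab
  · -- drop part
    set p := p0 hc a c with hp
    have hpp : p.IsPath := p0_isPath hc a c
    have hq' : (p.dropUntil b hmem).IsPath := hpp.dropUntil hmem
    have hspec := SimpleGraph.Walk.take_spec p hmem
    -- a not in support of dropUntil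
    have hnodup : p.support.Nodup := hpp.support_nodup
    have hsupp : p.support = (p.takeUntil b hmem).support ++ (p.dropUntil b hmem).support.tail := by
      conv_lhs => rw [← hspec]
      exact SimpleGraph.Walk.support_append _ _
    have hamem : a ∈ (p.takeUntil b hmem).support := SimpleGraph.Walk.start_mem_support _
    have hdisj : a ∉ (p.dropUntil b hmem).support.tail := by
      rw [hsupp] at hnodup
      exact (List.disjoint_of_nodup_append hnodup) hamem
    have hanots : a ∉ (p.dropUntil b hmem).support := by
      rw [SimpleGraph.Walk.support_eq_cons]
      simp only [List.mem_cons]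
      rintro (rfl | h)
      · exact hab rfl
      · exact hdisj h
    have hcons : (SimpleGraph.Walk.cons hadj (p.dropUntil b hmem)).IsPath :=
      (SimpleGraph.Walk.cons_isPath_iff _ _).2 ⟨hq', hanots⟩
    have := walk_eq_p0 hc ha _ hcons
    have : nxt hc a c = (SimpleGraph.Walk.cons hadj (p.dropUntil b hmem)).getVert 1 := by
      rw [nxt, ← this]
    rw [this, SimpleGraph.Walk.getVert_cons_succ (n := 0), SimpleGraph.Walk.getVert_zero]

/-- dichotomy: for adjacent a b and any target c, one of them is "next" from the other -/
lemma dich (hc : G.Connected) (ha : G.IsAcyclic) {a b : V} (hadj : G.Adj a b) (c : V) :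
    nxt hc a c = b ∨ nxt hc b c = a := by
  by_cases h : a ∈ (p0 hc b c).support
  · exact Or.inr (nxt_eq_of_adj_mem_support hc ha hadj.symm h)
  · left
    have hcons : (SimpleGraph.Walk.cons hadj (p0 hc b c)).IsPath :=
      (SimpleGraph.Walk.cons_isPath_iff _ _).2 ⟨p0_isPath hc b c, h⟩
    have heq := walk_eq_p0 hc ha _ hcons
    have : nxt hc a c = (SimpleGraph.Walk.cons hadj (p0 hc b c)).getVert 1 := by
      rw [nxt, ← heq]
    rw [this, SimpleGraph.Walk.getVert_cons_succ (n := 0), SimpleGraph.Walk.getVert_zero]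

section Rooted

variable (hc : G.Connected) (ha : G.IsAcyclic) (r : V)

/-- depth of a vertex relative to root r -/
noncomputable def dep (a : V) : ℕ := (p0 hc a r).length

/-- parent of a vertex -/
noncomputable def par (a : V) : V := nxt hc a r

include ha

lemma dep_par (a : V) (har : a ≠ r) : dep hc r (par hc r a) + 1 = dep hc r a := by
  obtain ⟨h, hw⟩ := p0_cons hc ha (b := r) har
  show (p0 hc (par hc r a) r).length + 1 = (p0 hc a r).length
  rw [hw, SimpleGraph.Walk.length_cons]
  rfl

lemma dep_r : dep hc r r = 0 := by show (p0 hc r r).length = 0; rw [p0_self hc ha]; rfl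

lemma dep_le_of_mem_support : ∀ n (a b : V), dep hc r a ≤ n →
    b ∈ (p0 hc a r).support → dep hc r b ≤ dep hc r a := by
  intro n
  induction n with
  | zero =>
    intro a b hn hb
    -- dep a = 0 → a = r? dep a = 0 means length 0 means a = r
    have : a = r := by
      have := Nat.le_zero.1 hn
      have := SimpleGraph.Walk.eq_of_length_eq_zero (this : (p0 hc a r).length = 0)
      exact this
    subst this
    rw [p0_self hc ha] at hb
    simp at hb
    subst hb; exact le_rfl
  | succ n ih =>
    intro a b hn hb
    by_cases har : a = r
    · subst har
      rw [p0_self hc ha] at hb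
      simp at hb
      subst hb; exact le_rfl
    · rw [support_p0_eq hc ha har] at hb
      rcases List.mem_cons.1 hb with rfl | hb
      · exact le_rfl
      · have hdp := dep_par hc ha r a har
        have h1 : dep hc r (par hc r a) ≤ n := by omega
        have := ih (par hc r a) b h1 hb
        omega

lemma mem_support_par (a w : V) (har : a ≠ r)
    (hw : w ∈ (p0 hc (par hc r a) r).support) : w ∈ (p0 hc a r).support := by
  rw [support_p0_eq hc ha har]
  exact List.mem_cons_of_mem _ hw

/-- adjacent vertex on the path to root is the parent -/
lemma par_eq_of_adj_mem (a b : V) (hadj : G.Adj a b)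
    (hb : b ∈ (p0 hc a r).support) : par hc r a = b :=
  nxt_eq_of_adj_mem_support hc ha hadj hb

/-- adjacency dichotomy with respect to root: u = par w or par u = w -/
lemma adj_par_dich (u w : V) (hadj : G.Adj u w) :
    par hc r u = w ∨ par hc r w = u := by
  rcases dich hc ha hadj r with h | h
  · exact Or.inl h
  · exact Or.inr h

end Rooted

section Main

variable [Fintype V] (hc : G.Connected) (ha : G.IsAcyclic) (J : Finset V)

/-- feasibility, with path-monotonicity in canonical form -/
def Feas (x : V → {j // j ∈ J} → ℝ) : Prop :=
  (∀ v j, 0 ≤ x v j) ∧ (∀ j : {j // j ∈ J}, x j.1 j = 1) ∧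
  (∀ j j' : {j // j ∈ J}, j ≠ j' → x j.1 j' = 0) ∧
  (∀ v, v ∉ J → ∑ j, x v j = 1) ∧
  (∀ v, v ∉ J → ∀ j : {j // j ∈ J}, x v j ≤ x (nxt hc v j.1) j)

/-- fractional pair -/
def frp (x : V → {j // j ∈ J} → ℝ) (v : V) (j : {j // j ∈ J}) : Prop :=
  0 < x v j ∧ x v j < 1

/-- fractional vertex -/
def frv (x : V → {j // j ∈ J} → ℝ) (v : V) : Prop := ∃ j, frp J x v j

variable {hc} {J}

lemma root_row {x : V → {j // j ∈ J} → ℝ} (hx : Feas hc J x) {v : V} (hv : v ∈ J)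
    (j : {j // j ∈ J}) : x v j = 0 ∨ x v j = 1 := by
  by_cases h : (⟨v, hv⟩ : {j // j ∈ J}) = j
  · right; rw [← h]; exact hx.2.1 ⟨v, hv⟩
  · left; exact hx.2.2.1 ⟨v, hv⟩ j h

lemma frv_not_mem {x : V → {j // j ∈ J} → ℝ} (hx : Feas hc J x) {v : V} (hv : frv J x v) :
    v ∉ J := by
  intro hmem
  obtain ⟨j, hj1, hj2⟩ := hv
  rcases root_row hx hmem j with h | h <;> rw [h] at hj1 hj2
  · exact lt_irrefl _ hj1
  · exact lt_irrefl _ hj2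

lemma single_le_row {x : V → {j // j ∈ J} → ℝ} (hx : Feas hc J x) (v : V)
    (j : {j // j ∈ J}) : x v j ≤ ∑ j', x v j' :=
  Finset.single_le_sum (fun j' _ => hx.1 v j') (Finset.mem_univ j)

lemma row_le_one {x : V → {j // j ∈ J} → ℝ} (hx : Feas hc J x) {v : V} (hv : v ∉ J)
    (j : {j // j ∈ J}) : x v j ≤ 1 := by
  have := single_le_row hx v j
  rwa [hx.2.2.2.1 v hv] at this

lemma pair_le_row {x : V → {j // j ∈ J} → ℝ} (hx : Feas hc J x) (v : V)
    {j j' : {j // j ∈ J}} (hne : j ≠ j') : x v j + x v j' ≤ ∑ j'', x v j'' := by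
  classical
  have hsub : ({j, j'} : Finset {j // j ∈ J}) ⊆ Finset.univ := Finset.subset_univ _
  have := Finset.sum_le_sum_of_subset_of_nonneg hsub (fun k _ _ => hx.1 v k)
  rwa [Finset.sum_pair hne] at this

lemma lt_one_of_frv {x : V → {j // j ∈ J} → ℝ} (hx : Feas hc J x) {v : V} (hv : frv J x v)
    (j : {j // j ∈ J}) : x v j < 1 := by
  obtain ⟨j0, hj0⟩ := hv
  have hvJ : v ∉ J := frv_not_mem hx ⟨j0, hj0⟩
  by_cases h : j = j0
  · subst h; exact hj0.2
  · have := pair_le_row hx v (Ne.symm h : j0 ≠ j)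
    rw [hx.2.2.2.1 v hvJ] at this
    have := hj0.1
    linarith [pair_le_row hx v (show j ≠ j0 from h), hx.2.2.2.1 v hvJ]

lemma not_frv_zero_or_one {x : V → {j // j ∈ J} → ℝ} (hx : Feas hc J x) {v : V}
    (hnf : ¬ frv J x v) (hv : v ∉ J) (j : {j // j ∈ J}) : x v j = 0 ∨ x v j = 1 := by
  rcases eq_or_lt_of_le (hx.1 v j) with h | h
  · exact Or.inl h.symm
  · rcases eq_or_lt_of_le (row_le_one hx hv j) with h1 | h1
    · exact Or.inr h1
    · exact absurd ⟨j, h, h1⟩ hnf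

lemma twofrac {x : V → {j // j ∈ J} → ℝ} (hx : Feas hc J x) {v : V}
    {j0 : {j // j ∈ J}} (hj0 : frp J x v j0) :
    ∃ j1, j1 ≠ j0 ∧ frp J x v j1 := by
  classical
  by_contra hcon
  push_neg at hcon
  have hvJ : v ∉ J := frv_not_mem hx ⟨j0, hj0⟩
  -- every other coordinate is 0
  have hzero : ∀ j1, j1 ≠ j0 → x v j1 = 0 := by
    intro j1 hne
    have hnf := hcon j1 hne
    rcases lt_or_eq_of_le (hx.1 v j1) with hpos | heq
    · exfalso
      apply hnf
      refine ⟨hpos, ?_⟩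
      rcases lt_or_eq_of_le (row_le_one hx hvJ j1) with hlt | heq1
      · exact hlt
      · exfalso
        have := pair_le_row hx v hne
        rw [hx.2.2.2.1 v hvJ, heq1] at this
        linarith [hj0.1]
    · exact heq.symm
  have : ∑ j, x v j = x v j0 := Finset.sum_eq_single j0 (fun j1 _ h => hzero j1 h) (by simp)
  rw [hx.2.2.2.1 v hvJ] at this
  exact absurd this.symm (ne_of_lt hj0.2)

/-- w is "unbound": its row differs from its parent's row -/
noncomputable def unb (hc : G.Connected) (r : V) {J : Finset V}
    (x : V → {j // j ∈ J} → ℝ) (w : V) : Prop :=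
  ∃ j, x w j ≠ x (par hc r w) j

open Classical in
noncomputable def Wcard (hc : G.Connected) (r : V) {J : Finset V}
    (x : V → {j // j ∈ J} → ℝ) : ℕ :=
  (Finset.univ.filter (fun w => frv J x w ∧ unb hc r x w)).card

variable {ha} {r : V}

include ha in
lemma exists_unb (hr : r ∈ J) {x : V → {j // j ∈ J} → ℝ} (hx : Feas hc J x)
    {v : V} (hf : frv J x v) : ∃ w, frv J x w ∧ unb hc r x w := by
  classical
  have hne : (Finset.univ.filter (fun w => frv J x w)).Nonempty :=
    ⟨v, by simp [hf]⟩
  obtain ⟨w, hwmem, hwmin⟩ := Finset.exists_min_image _ (dep hc r) hne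
  simp only [Finset.mem_filter, Finset.mem_univ, true_and] at hwmem
  refine ⟨w, hwmem, ?_⟩
  by_contra hnb
  rw [unb] at hnb
  push_neg at hnb
  have hwJ : w ∉ J := frv_not_mem hx hwmem
  have hwr : w ≠ r := fun h => hwJ (h ▸ hr)
  have hpfr : frv J x (par hc r w) := by
    obtain ⟨j, hj⟩ := hwmem
    exact ⟨j, (hnb j) ▸ hj.1, (hnb j) ▸ hj.2⟩
  have := hwmin (par hc r w) (by simp [hpfr])
  have hdp := dep_par hc ha r w hwr
  omega

include ha in
lemma key (hr : r ∈ J) : ∀ (n : ℕ) (x : V → {j // j ∈ J} → ℝ), Feas hc J x →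
    (∃ v, frv J x v) → Wcard hc r x ≤ n →
    ∃ d : V → {j // j ∈ J} → ℝ, d ≠ 0 ∧
      (∀ v j, ¬ frp J x v j → d v j = 0) ∧
      (∀ v, ∑ j, d v j = 0) ∧
      (∀ v, v ∉ J → ∀ j, x v j = x (nxt hc v j.1) j → d v j = d (nxt hc v j.1) j) := by
  classical
  intro n
  induction n with
  | zero =>
    intro x hx hf hW
    exfalso
    obtain ⟨v, hv⟩ := hf
    obtain ⟨w, hw1, hw2⟩ := exists_unb (ha := ha) hr hx hv
    have : w ∈ Finset.univ.filter (fun w => frv J x w ∧ unb hc r x w) := by simp [hw1, hw2]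
    have := Finset.card_pos.2 ⟨w, this⟩
    rw [Wcard] at hW
    omega
  | succ n IH =>
    intro x hx hf hW
    obtain ⟨v₀, hv₀⟩ := hf
    obtain ⟨w₀, hw₀1, hw₀2⟩ := exists_unb (ha := ha) hr hx hv₀
    -- pick deepest unbound fractional vertex
    set UF := Finset.univ.filter (fun w => frv J x w ∧ unb hc r x w) with hUF
    have hUFne : UF.Nonempty := ⟨w₀, by simp [hUF, hw₀1, hw₀2]⟩
    obtain ⟨vs, hvsmem, hvsmax⟩ := Finset.exists_max_image UF (dep hc r) hUFne
    simp only [hUF, Finset.mem_filter, Finset.mem_univ, true_and] at hvsmem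
    obtain ⟨hvfr, hvunb⟩ := hvsmem
    have hvJ : vs ∉ J := frv_not_mem hx hvfr
    have hvr : vs ≠ r := fun h => hvJ (h ▸ hr)
    set p := par hc r vs with hp
    have hdepp : dep hc r p + 1 = dep hc r vs := dep_par hc ha r vs hvr
    -- the blob D
    set D : Set V := {w | frv J x w ∧ vs ∈ (p0 hc w r).support} with hD
    have hvD : vs ∈ D := ⟨hvfr, SimpleGraph.Walk.start_mem_support _⟩
    have hDJ : ∀ w ∈ D, w ∉ J := fun w hw => frv_not_mem hx hw.1
    have hpD : p ∉ D := by
      rintro ⟨-, hmem⟩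
      have := dep_le_of_mem_support hc ha r (dep hc r p) p vs le_rfl hmem
      omega
    have hDr : ∀ w ∈ D, w ≠ r := fun w hw h => (hDJ w hw) (h ▸ hr)
    -- F2
    have F2 : ∀ w ∈ D, w ≠ vs →
        (par hc r w ∈ D ∧ (∀ j, x w j = x (par hc r w) j) ∧ dep hc r vs < dep hc r w) := by
      intro w hw hwv
      obtain ⟨hwfr, hwsupp⟩ := hw
      have hwJ : w ∉ J := frv_not_mem hx hwfr
      have hwr : w ≠ r := fun h => hwJ (h ▸ hr)
      have hmem' : vs ∈ (p0 hc (par hc r w) r).support := by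
        rw [support_p0_eq hc ha hwr] at hwsupp
        rcases List.mem_cons.1 hwsupp with h | h
        · exact absurd h.symm hwv
        · exact h
      have hdep2 : dep hc r (par hc r w) + 1 = dep hc r w := dep_par hc ha r w hwr
      have hdlt : dep hc r vs < dep hc r w := by
        have := dep_le_of_mem_support hc ha r _ (par hc r w) vs le_rfl hmem'
        omega
      have hbnd : ∀ j, x w j = x (par hc r w) j := by
        by_contra hun
        push_neg at hun
        obtain ⟨j, hj⟩ := hun
        have hmemUF : w ∈ UF := Finset.mem_filter.2 ⟨Finset.mem_univ w, hwfr,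
          (⟨j, hj⟩ : ∃ j, x w j ≠ x (par hc r w) j)⟩
        have := hvsmax w hmemUF
        omega
      have hpfr : frv J x (par hc r w) := by
        obtain ⟨j, hj⟩ := hwfr
        exact ⟨j, (hbnd j) ▸ hj.1, (hbnd j) ▸ hj.2⟩
      exact ⟨⟨hpfr, hmem'⟩, hbnd, hdlt⟩
    -- D3 : all rows on D equal the row of vs
    have D3 : ∀ w ∈ D, ∀ j, x w j = x vs j := by
      have D3aux : ∀ m, ∀ w ∈ D, dep hc r w ≤ m → ∀ j, x w j = x vs j := by
        intro m
        induction m with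
        | zero =>
          intro w hw hdep j
          by_cases hwv : w = vs
          · subst hwv; rfl
          · exact absurd hdep (by have := (F2 w hw hwv).2.2; omega)
        | succ m ih =>
          intro w hw hdep j
          by_cases hwv : w = vs
          · subst hwv; rfl
          · obtain ⟨hpD', hbnd, hlt⟩ := F2 w hw hwv
            have hd2 : dep hc r (par hc r w) ≤ m := by
              have := dep_par hc ha r w (hDr w hw)
              omega
            rw [hbnd j]
            exact ih (par hc r w) hpD' hd2 j
      exact fun w hw j => D3aux (dep hc r w) w hw le_rfl j
    have hparr : par hc r r = r := by
      show (p0 hc r r).getVert 1 = r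
      rw [p0_self hc ha]
      rfl
    -- F3 : classification of neighbours of the blob
    have F3 : ∀ w ∈ D, ∀ u, G.Adj w u → u ∉ D →
        (w = vs ∧ u = p) ∨ (par hc r u = w ∧ ¬ frv J x u ∧ u ≠ r) := by
      intro w hw u hadj huD
      rcases adj_par_dich hc ha r w u hadj with h1 | h1
      · -- par w = u
        by_cases hwv : w = vs
        · subst hwv
          exact Or.inl ⟨rfl, h1 ▸ rfl⟩
        · exact absurd (h1 ▸ (F2 w hw hwv).1) huD
      · -- par u = w
        right
        have hur : u ≠ r := by
          intro h
          rw [h, hparr] at h1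
          exact hDr w hw h1.symm
        refine ⟨h1, ?_, hur⟩
        intro hufr
        apply huD
        refine ⟨hufr, mem_support_par hc ha r u vs hur ?_⟩
        rw [h1]
        exact hw.2
    -- locals
    set L : Finset {j // j ∈ J} :=
      Finset.univ.filter (fun j => frp J x vs j ∧ x p j ≠ x vs j) with hL
    have hLne : L.Nonempty := by
      by_contra hLe
      rw [Finset.not_nonempty_iff_eq_empty] at hLe
      have hall : ∀ j, frp J x vs j → x p j = x vs j := by
        intro j hj
        by_contra hne
        have hjL : j ∈ L := by
          rw [hL, Finset.mem_filter]
          exact ⟨Finset.mem_univ j, hj, hne⟩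
        rw [hLe] at hjL
        simp at hjL
      obtain ⟨j0, hj0⟩ := id hvfr
      have hpfrj0 : frp J x p j0 :=
        ⟨(hall j0 hj0).symm ▸ hj0.1, (hall j0 hj0).symm ▸ hj0.2⟩
      have hpJ : p ∉ J := frv_not_mem hx ⟨j0, hpfrj0⟩
      have hsum1 : ∑ j, x p j = 1 := hx.2.2.2.1 p hpJ
      have hsum2 : ∑ j, x vs j = 1 := hx.2.2.2.1 vs hvJ
      have hterm : ∀ j, 0 ≤ x p j - x vs j := by
        intro j
        by_cases hf : frp J x vs j
        · rw [hall j hf]; simp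
        · have h0 : x vs j = 0 := by
            rcases eq_or_lt_of_le (hx.1 vs j) with h | h
            · exact h.symm
            · exact absurd ⟨h, lt_one_of_frv hx hvfr j⟩ hf
          rw [h0]
          simpa using hx.1 p j
      have hs : ∑ j, (x p j - x vs j) = 0 := by
        rw [Finset.sum_sub_distrib, hsum1, hsum2]
        ring
      obtain ⟨j, hj⟩ := hvunb
      apply hj
      have := (Finset.sum_eq_zero_iff_of_nonneg (fun j _ => hterm j)).1 hs j (Finset.mem_univ j)
      rw [← hp]
      linarith
    rcases lt_or_ge 1 L.card with hcard | hcard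
    · -- Case A : at least two "local" indices
      obtain ⟨j1, hj1, j2, hj2, hne12⟩ := Finset.one_lt_card.1 hcard
      rw [hL, Finset.mem_filter] at hj1 hj2
      obtain ⟨-, hj1f, hj1ne⟩ := hj1
      obtain ⟨-, hj2f, hj2ne⟩ := hj2
      set d : V → {j // j ∈ J} → ℝ :=
        fun w j => if w ∈ D then (if j = j1 then 1 else if j = j2 then -1 else 0) else 0 with hd
      have hdef : ∀ w j',
          d w j' = if w ∈ D then (if j' = j1 then (1:ℝ) else if j' = j2 then -1 else 0) else 0 :=
        fun _ _ => rfl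
      refine ⟨d, ?_, ?_, ?_, ?_⟩
      · intro h0
        have h1 : d vs j1 = 0 := by rw [h0]; rfl
        rw [hdef, if_pos hvD, if_pos rfl] at h1
        norm_num at h1
      · intro v j hnf
        rw [hdef]
        by_cases hvD' : v ∈ D
        · rw [if_pos hvD']
          have hrow := D3 v hvD'
          have hx1 : j ≠ j1 := by
            rintro rfl
            exact hnf ⟨(hrow j).symm ▸ hj1f.1, (hrow j).symm ▸ hj1f.2⟩
          have hx2 : j ≠ j2 := by
            rintro rfl
            exact hnf ⟨(hrow j).symm ▸ hj2f.1, (hrow j).symm ▸ hj2f.2⟩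
          rw [if_neg hx1, if_neg hx2]
        · rw [if_neg hvD']
      · intro v
        simp only [hdef]
        by_cases hvD' : v ∈ D
        · simp only [if_pos hvD']
          have hsplit : ∀ j : {j // j ∈ J},
              (if j = j1 then (1:ℝ) else if j = j2 then -1 else 0) =
              (if j = j1 then (1:ℝ) else 0) + (if j = j2 then (-1:ℝ) else 0) := by
            intro j
            by_cases h1 : j = j1
            · simp [h1, hne12]
            · by_cases h2 : j = j2 <;> simp [h1, h2, Ne.symm hne12]
          rw [Finset.sum_congr rfl (fun j _ => hsplit j), Finset.sum_add_distrib,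
            Finset.sum_ite_eq' Finset.univ j1 (fun _ => (1:ℝ)),
            Finset.sum_ite_eq' Finset.univ j2 (fun _ => (-1:ℝ))]
          simp
        · simp only [if_neg hvD']
          simp
      · intro v hvJ' j hxeq
        rw [hdef, hdef]
        by_cases hvD' : v ∈ D <;> by_cases huD' : nxt hc v j.1 ∈ D
        · rw [if_pos hvD', if_pos huD']
        · rw [if_pos hvD', if_neg huD']
          have hadj : G.Adj v (nxt hc v j.1) := adj_nxt hc ha (fun h => hvJ' (h ▸ j.2))
          rcases F3 v hvD' _ hadj huD' with ⟨hveq, hueq⟩ | ⟨hpar, hnfr, -⟩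
          · have hxpj : x p j = x vs j := by rw [← hveq, ← hueq]; exact hxeq.symm
            have hn1 : j ≠ j1 := by rintro rfl; exact hj1ne hxpj
            have hn2 : j ≠ j2 := by rintro rfl; exact hj2ne hxpj
            rw [if_neg hn1, if_neg hn2]
          · have hrow := D3 v hvD'
            have hn1 : j ≠ j1 := by
              rintro rfl
              exact hnfr ⟨j, (hxeq ▸ ((hrow j).symm ▸ hj1f.1) : (0:ℝ) < x (nxt hc v j.1) j),
                (hxeq ▸ ((hrow j).symm ▸ hj1f.2))⟩
            have hn2 : j ≠ j2 := by
              rintro rfl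
              exact hnfr ⟨j, (hxeq ▸ ((hrow j).symm ▸ hj2f.1) : (0:ℝ) < x (nxt hc v j.1) j),
                (hxeq ▸ ((hrow j).symm ▸ hj2f.2))⟩
            rw [if_neg hn1, if_neg hn2]
        · rw [if_neg hvD', if_pos huD']
          have hadj : G.Adj v (nxt hc v j.1) := adj_nxt hc ha (fun h => hvJ' (h ▸ j.2))
          rcases F3 _ huD' v hadj.symm hvD' with ⟨hueq, hveq⟩ | ⟨hpar, hnfr, -⟩
          · have hxpj : x p j = x vs j := by rw [← hveq, ← hueq]; exact hxeq
            have hn1 : j ≠ j1 := by rintro rfl; exact hj1ne hxpj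
            have hn2 : j ≠ j2 := by rintro rfl; exact hj2ne hxpj
            rw [if_neg hn1, if_neg hn2]
          · have hrow := D3 _ huD'
            have hn1 : j ≠ j1 := by
              rintro rfl
              exact hnfr ⟨j, (hxeq.symm ▸ ((hrow j).symm ▸ hj1f.1) : (0:ℝ) < x v j),
                (hxeq.symm ▸ ((hrow j).symm ▸ hj1f.2))⟩
            have hn2 : j ≠ j2 := by
              rintro rfl
              exact hnfr ⟨j, (hxeq.symm ▸ ((hrow j).symm ▸ hj2f.1) : (0:ℝ) < x v j),
                (hxeq.symm ▸ ((hrow j).symm ▸ hj2f.2))⟩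
            rw [if_neg hn1, if_neg hn2]
        · rw [if_neg hvD', if_neg huD']
    · -- Case B : exactly one local index
      have hcard1 : L.card = 1 := le_antisymm hcard (Finset.card_pos.2 hLne)
      obtain ⟨js, hjseq⟩ := Finset.card_eq_one.1 hcard1
      have hjsL : js ∈ L := by rw [hjseq]; exact Finset.mem_singleton_self js
      rw [hL, Finset.mem_filter] at hjsL
      obtain ⟨-, hjsf, hjsne⟩ := hjsL
      have hnotL : ∀ j, frp J x vs j → j ≠ js → x p j = x vs j := by
        intro j hj hne
        by_contra hne2
        have : j ∈ L := by rw [hL, Finset.mem_filter]; exact ⟨Finset.mem_univ j, hj, hne2⟩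
        rw [hjseq] at this
        exact hne (Finset.mem_singleton.1 this)
      obtain ⟨j2, hj2ne, hj2f⟩ := twofrac hx hjsf
      have hpj2 : x p j2 = x vs j2 := hnotL j2 hj2f hj2ne
      have hpf2 : frp J x p j2 := ⟨hpj2.symm ▸ hj2f.1, hpj2.symm ▸ hj2f.2⟩
      have hpfr : frv J x p := ⟨j2, hpf2⟩
      have hpJ : p ∉ J := frv_not_mem hx hpfr
      have hadjvp : G.Adj vs p := by rw [hp]; exact adj_nxt hc ha hvr
      -- D5
      have D5 : ∀ w ∈ D, ∀ j : {j // j ∈ J}, par hc r (nxt hc w j.1) = w → x p j ≤ x w j := by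
        have aux : ∀ m, ∀ w ∈ D, dep hc r w ≤ m →
            ∀ j : {j // j ∈ J}, par hc r (nxt hc w j.1) = w → x p j ≤ x w j := by
          intro m
          induction m with
          | zero =>
            intro w hw hdep j hpar
            by_cases hwv : w = vs
            · rw [hwv] at hpar ⊢
              rcases dich hc ha hadjvp j.1 with h2 | h2
              · rw [h2] at hpar
                by_cases hpr : p = r
                · rw [hpr, hparr] at hpar
                  exact absurd hpar.symm hvr
                · have := dep_par hc ha r p hpr
                  rw [hpar] at this
                  omega
              · have := hx.2.2.2.2 p hpJ j
                rwa [h2] at this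
            · have := (F2 w hw hwv).2.2
              omega
          | succ m ih =>
            intro w hw hdep j hpar
            by_cases hwv : w = vs
            · rw [hwv] at hpar ⊢
              rcases dich hc ha hadjvp j.1 with h2 | h2
              · rw [h2] at hpar
                by_cases hpr : p = r
                · rw [hpr, hparr] at hpar
                  exact absurd hpar.symm hvr
                · have := dep_par hc ha r p hpr
                  rw [hpar] at this
                  omega
              · have := hx.2.2.2.2 p hpJ j
                rwa [h2] at this
            · obtain ⟨hbD, hbnd, hlt⟩ := F2 w hw hwv
              have hadjwb : G.Adj w (par hc r w) := adj_nxt hc ha (hDr w hw)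
              rcases dich hc ha hadjwb j.1 with h2 | h2
              · rw [h2] at hpar
                have hbr : par hc r w ≠ r := fun h => hDJ _ hbD (by rw [h]; exact hr)
                have h3 := dep_par hc ha r (par hc r w) hbr
                have h4 := dep_par hc ha r w (hDr w hw)
                rw [hpar] at h3
                omega
              · have hle : x (par hc r w) j ≤ x w j := by
                  have := hx.2.2.2.2 (par hc r w) (hDJ _ hbD) j
                  rwa [h2] at this
                have hdep2 : dep hc r (par hc r w) ≤ m := by
                  have := dep_par hc ha r w (hDr w hw)
                  omega
                have hpar2 : par hc r (nxt hc (par hc r w) j.1) = par hc r w := by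
                  rw [h2]
                refine le_trans (ih (par hc r w) hbD hdep2 j hpar2) hle
        exact fun w hw j hpar => aux (dep hc r w) w hw le_rfl j hpar
      -- the modified point
      set xt : V → {j // j ∈ J} → ℝ := fun w j => if w ∈ D then x p j else x w j with hxt
      have hxtdef : ∀ w j, xt w j = if w ∈ D then x p j else x w j := fun _ _ => rfl
      have hFeasxt : Feas hc J xt := by
        refine ⟨?_, ?_, ?_, ?_, ?_⟩
        · intro v j
          rw [hxtdef]
          by_cases hvD' : v ∈ D
          · rw [if_pos hvD']; exact hx.1 p j
          · rw [if_neg hvD']; exact hx.1 v j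
        · intro j
          rw [hxtdef, if_neg (fun h => hDJ _ h j.2)]
          exact hx.2.1 j
        · intro j j' hne
          rw [hxtdef, if_neg (fun h => hDJ _ h j.2)]
          exact hx.2.2.1 j j' hne
        · intro v hvJ'
          by_cases hvD' : v ∈ D
          · simp only [hxtdef, if_pos hvD']
            exact hx.2.2.2.1 p hpJ
          · simp only [hxtdef, if_neg hvD']
            exact hx.2.2.2.1 v hvJ'
        · intro v hvJ' j
          by_cases hvD' : v ∈ D <;> by_cases huD' : nxt hc v j.1 ∈ D
          · rw [hxtdef, hxtdef, if_pos hvD', if_pos huD']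
          · rw [hxtdef, hxtdef, if_pos hvD', if_neg huD']
            have hadj : G.Adj v (nxt hc v j.1) := adj_nxt hc ha (fun h => hvJ' (h ▸ j.2))
            rcases F3 v hvD' _ hadj huD' with ⟨hveq, hueq⟩ | ⟨hpar, hnfr, -⟩
            · rw [hueq]
            · exact le_trans (D5 v hvD' j hpar) (hx.2.2.2.2 v hvJ' j)
          · rw [hxtdef, hxtdef, if_neg hvD', if_pos huD']
            have hadj : G.Adj v (nxt hc v j.1) := adj_nxt hc ha (fun h => hvJ' (h ▸ j.2))
            rcases F3 _ huD' v hadj.symm hvD' with ⟨hueq, hveq⟩ | ⟨hpar, hnfr, -⟩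
            · rw [hveq]
            · rcases not_frv_zero_or_one hx hnfr hvJ' j with h0 | h1
              · rw [h0]; exact hx.1 p j
              · exfalso
                have hle := hx.2.2.2.2 v hvJ' j
                have heq2 := D3 _ huD' j
                rw [h1, heq2] at hle
                exact absurd (lt_of_le_of_lt hle (lt_one_of_frv hx hvfr j)) (lt_irrefl 1)
          · rw [hxtdef, hxtdef, if_neg hvD', if_neg huD']
            exact hx.2.2.2.2 v hvJ' j
      -- fractionality transfer
      have hfrveq : ∀ w, frv J xt w ↔ frv J x w := by
        intro w
        by_cases hwD : w ∈ D
        · constructor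
          · intro _; exact hwD.1
          · intro _
            refine ⟨j2, ?_, ?_⟩
            · rw [hxtdef, if_pos hwD]; exact hpf2.1
            · rw [hxtdef, if_pos hwD]; exact hpf2.2
        · constructor
          · rintro ⟨j, h1, h2⟩
            rw [hxtdef, if_neg hwD] at h1 h2
            exact ⟨j, h1, h2⟩
          · rintro ⟨j, h1, h2⟩
            refine ⟨j, ?_, ?_⟩
            · rw [hxtdef, if_neg hwD]; exact h1
            · rw [hxtdef, if_neg hwD]; exact h2
      have hvsUF : vs ∈ UF := Finset.mem_filter.2 ⟨Finset.mem_univ vs, hvfr, hvunb⟩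
      -- the unbound fractional set shrinks
      have hUFxt : Finset.univ.filter (fun w => frv J xt w ∧ unb hc r xt w) = UF.erase vs := by
        ext w
        simp only [Finset.mem_filter, Finset.mem_univ, true_and, Finset.mem_erase, hUF]
        constructor
        · rintro ⟨hfr, hub⟩
          have hfrx : frv J x w := (hfrveq w).1 hfr
          by_cases hwD : w ∈ D
          · exfalso
            obtain ⟨j, hj⟩ := hub
            apply hj
            by_cases hwv : w = vs
            · subst hwv
              rw [hxtdef, if_pos hwD, hxtdef, ← hp, if_neg hpD]
            · have hbD := (F2 w hwD hwv).1
              rw [hxtdef, if_pos hwD, hxtdef, if_pos hbD]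
          · have hwr : w ≠ r := fun h => (frv_not_mem hx hfrx) (h ▸ hr)
            have hparD : par hc r w ∉ D := by
              intro hpar
              exact hwD ⟨hfrx, mem_support_par hc ha r w vs hwr hpar.2⟩
            refine ⟨?_, hfrx, ?_⟩
            · rintro rfl; exact hwD hvD
            · obtain ⟨j, hj⟩ := hub
              rw [hxtdef, if_neg hwD, hxtdef, if_neg hparD] at hj
              exact ⟨j, hj⟩
        · rintro ⟨hwvs, hfrx, hub⟩
          have hwD : w ∉ D := by
            intro hwD
            by_cases hwv : w = vs
            · exact hwvs hwv
            · obtain ⟨j, hj⟩ := hub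
              exact hj ((F2 w hwD hwv).2.1 j)
          have hwr : w ≠ r := fun h => (frv_not_mem hx hfrx) (h ▸ hr)
          have hparD : par hc r w ∉ D := by
            intro hpar
            exact hwD ⟨hfrx, mem_support_par hc ha r w vs hwr hpar.2⟩
          refine ⟨(hfrveq w).2 hfrx, ?_⟩
          obtain ⟨j, hj⟩ := hub
          refine ⟨j, ?_⟩
          rw [hxtdef, if_neg hwD, hxtdef, if_neg hparD]
          exact hj
      have hWxt : Wcard hc r xt ≤ n := by
        have h1 : Wcard hc r xt = UF.card - 1 := by
          rw [Wcard, hUFxt, Finset.card_erase_of_mem hvsUF]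
        have h2 : 1 ≤ UF.card := Finset.card_pos.2 ⟨vs, hvsUF⟩
        rw [Wcard] at hW
        rw [← hUF] at hW
        omega
      obtain ⟨e, hene, hesupp, hesum, hetight⟩ :=
        IH xt hFeasxt ⟨vs, (hfrveq vs).2 hvfr⟩ hWxt
      -- D6 : e is constant on D (equal to its value at p)
      have hxtD : ∀ w ∈ D, ∀ j, xt w j = x p j := by
        intro w hw j; rw [hxtdef, if_pos hw]
      have hxtp : ∀ j, xt p j = x p j := by
        intro j; rw [hxtdef, if_neg hpD]
      have D6 : ∀ w ∈ D, ∀ j, e w j = e p j := by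
        have aux : ∀ m, ∀ w ∈ D, dep hc r w ≤ m → ∀ j, e w j = e p j := by
          intro m
          induction m with
          | zero =>
            intro w hw hdep j
            by_cases hwv : w = vs
            · rw [hwv]
              rcases dich hc ha hadjvp j.1 with h2 | h2
              · have := hetight vs hvJ j (by rw [h2, hxtD vs hvD, hxtp])
                rwa [h2] at this
              · have := hetight p hpJ j (by rw [h2, hxtD vs hvD, hxtp])
                rw [h2] at this
                exact this.symm
            · have := (F2 w hw hwv).2.2
              omega
          | succ m ih =>
            intro w hw hdep j
            by_cases hwv : w = vs
            · rw [hwv]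
              rcases dich hc ha hadjvp j.1 with h2 | h2
              · have := hetight vs hvJ j (by rw [h2, hxtD vs hvD, hxtp])
                rwa [h2] at this
              · have := hetight p hpJ j (by rw [h2, hxtD vs hvD, hxtp])
                rw [h2] at this
                exact this.symm
            · obtain ⟨hbD, hbnd, hlt⟩ := F2 w hw hwv
              have hdep2 : dep hc r (par hc r w) ≤ m := by
                have := dep_par hc ha r w (hDr w hw)
                omega
              have hadjwb : G.Adj w (par hc r w) := adj_nxt hc ha (hDr w hw)
              rcases dich hc ha hadjwb j.1 with h2 | h2
              · have := hetight w (hDJ w hw) j (by rw [h2, hxtD w hw, hxtD _ hbD])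
                rw [h2] at this
                rw [this]
                exact ih (par hc r w) hbD hdep2 j
              · have := hetight (par hc r w) (hDJ _ hbD) j (by rw [h2, hxtD w hw, hxtD _ hbD])
                rw [h2] at this
                rw [← this]
                exact ih (par hc r w) hbD hdep2 j
        exact fun w hw j => aux (dep hc r w) w hw le_rfl j
      -- the lifted direction
      set S : ℝ := ∑ j' ∈ Finset.univ.filter
        (fun j' => frp J x p j' ∧ ¬(frp J x vs j' ∧ x p j' = x vs j')), e p j' with hS
      set d : V → {j // j ∈ J} → ℝ := fun w j => if w ∈ D then
          (if frp J x vs j ∧ x p j = x vs j then e p j else if j = js then S else 0)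
        else e w j with hd
      have hddef : ∀ w j, d w j = if w ∈ D then
          (if frp J x vs j ∧ x p j = x vs j then e p j else if j = js then S else 0)
        else e w j := fun _ _ => rfl
      refine ⟨d, ?_, ?_, ?_, ?_⟩
      · -- nonzero
        intro h0
        apply hene
        funext w j
        have hzero : ∀ w' j', d w' j' = 0 := by
          intro w' j'; rw [h0]; rfl
        by_cases hwD : w ∈ D
        · rw [D6 w hwD j]
          have := hzero p j
          rwa [hddef, if_neg hpD] at this
        · have := hzero w j
          rwa [hddef, if_neg hwD] at this
      · -- support
        intro v j hnf
        rw [hddef]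
        by_cases hvD' : v ∈ D
        · rw [if_pos hvD']
          have hrow := D3 v hvD'
          have hnf2 : ¬ frp J x vs j := fun hf => hnf ⟨(hrow j).symm ▸ hf.1, (hrow j).symm ▸ hf.2⟩
          rw [if_neg (fun hcc => hnf2 hcc.1), if_neg (fun hjs => hnf2 (by rw [hjs]; exact hjsf))]
        · rw [if_neg hvD']
          apply hesupp
          intro hf
          apply hnf
          have heqq : xt v j = x v j := by rw [hxtdef, if_neg hvD']
          exact ⟨heqq ▸ hf.1, heqq ▸ hf.2⟩
      · -- row sums
        intro v
        by_cases hvD' : v ∈ D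
        · simp only [hddef, if_pos hvD']
          rw [← Finset.sum_filter_add_sum_filter_not Finset.univ
            (fun j => frp J x vs j ∧ x p j = x vs j)]
          have h1 : ∑ j ∈ Finset.univ.filter (fun j => frp J x vs j ∧ x p j = x vs j),
              (if frp J x vs j ∧ x p j = x vs j then e p j else if j = js then S else 0) =
              ∑ j ∈ Finset.univ.filter (fun j => frp J x vs j ∧ x p j = x vs j), e p j :=
            Finset.sum_congr rfl (fun j hj => by rw [if_pos (Finset.mem_filter.1 hj).2])
          have h2 : ∑ j ∈ Finset.univ.filter (fun j => ¬(frp J x vs j ∧ x p j = x vs j)),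
              (if frp J x vs j ∧ x p j = x vs j then e p j else if j = js then S else 0) = S := by
            have h2a : ∀ j ∈ Finset.univ.filter (fun j => ¬(frp J x vs j ∧ x p j = x vs j)),
                (if frp J x vs j ∧ x p j = x vs j then e p j else if j = js then S else 0) =
                (if j = js then S else 0) :=
              fun j hj => by rw [if_neg (Finset.mem_filter.1 hj).2]
            rw [Finset.sum_congr rfl h2a, Finset.sum_ite_eq' _ js (fun _ => S), if_pos]
            rw [Finset.mem_filter]
            exact ⟨Finset.mem_univ js, fun hcc => hjsne hcc.2⟩
          rw [h1, h2]
          have h3 : S = ∑ j ∈ Finset.univ.filter (fun j => ¬(frp J x vs j ∧ x p j = x vs j)),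
              e p j := by
            rw [hS]
            refine Finset.sum_subset ?_ ?_
            · intro j hj
              rw [Finset.mem_filter] at hj ⊢
              exact ⟨Finset.mem_univ j, hj.2.2⟩
            · intro j hj hnj
              apply hesupp
              intro hf
              apply hnj
              rw [Finset.mem_filter] at hj ⊢
              refine ⟨Finset.mem_univ j, ⟨(hxtp j) ▸ hf.1, (hxtp j) ▸ hf.2⟩, hj.2⟩
          rw [h3, Finset.sum_filter_add_sum_filter_not]
          exact hesum p
        · simp only [hddef, if_neg hvD']
          exact hesum v
      · -- tightness
        intro v hvJ' j hxeq
        rw [hddef, hddef]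
        by_cases hvD' : v ∈ D <;> by_cases huD' : nxt hc v j.1 ∈ D
        · rw [if_pos hvD', if_pos huD']
        · rw [if_pos hvD', if_neg huD']
          have hadj : G.Adj v (nxt hc v j.1) := adj_nxt hc ha (fun h => hvJ' (h ▸ j.2))
          rcases F3 v hvD' _ hadj huD' with ⟨hveq, hueq⟩ | ⟨hpar, hnfr, -⟩
          · have hxpj : x p j = x vs j := by
              rw [← hveq, ← hueq]
              exact hxeq.symm
            by_cases hfj : frp J x vs j
            · rw [if_pos ⟨hfj, hxpj⟩, hueq]
            · rw [if_neg (fun hcc => hfj hcc.1), if_neg (fun hjs => hfj (by rw [hjs]; exact hjsf))]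
              symm
              rw [hueq]
              apply hesupp
              intro hf
              apply hfj
              have heqq : xt p j = x vs j := by rw [hxtp, hxpj]
              exact ⟨heqq ▸ hf.1, heqq ▸ hf.2⟩
          · have hrow := D3 v hvD'
            have hfj : ¬ frp J x vs j := by
              intro hf
              apply hnfr
              refine ⟨j, ?_, ?_⟩
              · rw [← hxeq, hrow j]; exact hf.1
              · rw [← hxeq, hrow j]; exact hf.2
            rw [if_neg (fun hcc => hfj hcc.1), if_neg (fun hjs => hfj (by rw [hjs]; exact hjsf))]
            symm
            apply hesupp
            intro hf
            apply hfj
            have heqq : xt (nxt hc v j.1) j = x vs j := by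
              rw [hxtdef, if_neg huD', ← hxeq, hrow j]
            exact ⟨heqq ▸ hf.1, heqq ▸ hf.2⟩
        · rw [if_neg hvD', if_pos huD']
          have hadj : G.Adj v (nxt hc v j.1) := adj_nxt hc ha (fun h => hvJ' (h ▸ j.2))
          rcases F3 _ huD' v hadj.symm hvD' with ⟨hueq, hveq⟩ | ⟨hpar, hnfr, -⟩
          · have hxpj : x p j = x vs j := by
              rw [← hveq, ← hueq]
              exact hxeq
            by_cases hfj : frp J x vs j
            · rw [if_pos ⟨hfj, hxpj⟩, hveq]
            · rw [if_neg (fun hcc => hfj hcc.1), if_neg (fun hjs => hfj (by rw [hjs]; exact hjsf))]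
              rw [hveq]
              apply hesupp
              intro hf
              apply hfj
              have heqq : xt p j = x vs j := by rw [hxtp, hxpj]
              exact ⟨heqq ▸ hf.1, heqq ▸ hf.2⟩
          · have hrow := D3 _ huD'
            have hfj : ¬ frp J x vs j := by
              intro hf
              apply hnfr
              refine ⟨j, ?_, ?_⟩
              · rw [hxeq, hrow j]; exact hf.1
              · rw [hxeq, hrow j]; exact hf.2
            rw [if_neg (fun hcc => hfj hcc.1), if_neg (fun hjs => hfj (by rw [hjs]; exact hjsf))]
            apply hesupp
            intro hf
            apply hfj
            have heqq : xt v j = x vs j := by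
              rw [hxtdef, if_neg hvD', hxeq, hrow j]
            exact ⟨heqq ▸ hf.1, heqq ▸ hf.2⟩
        · rw [if_neg hvD', if_neg huD']
          apply hetight v hvJ' j
          rw [hxtdef, hxtdef, if_neg hvD', if_neg huD']
          exact hxeq

include ha in
lemma midpoint_of_frac (hr : r ∈ J) {x : V → {j // j ∈ J} → ℝ} (hx : Feas hc J x)
    {v0 : V} {j0 : {j // j ∈ J}} (hf : frp J x v0 j0) :
    ∃ y z : V → {j // j ∈ J} → ℝ, Feas hc J y ∧ Feas hc J z ∧ y ≠ z ∧
      x = (1/2 : ℝ) • (y + z) := by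
  classical
  obtain ⟨d, hdne, hdsupp, hdsum, hdtight⟩ :=
    key (ha := ha) hr (Wcard hc r x) x hx ⟨v0, j0, hf⟩ le_rfl
  haveI : Nonempty V := ⟨r⟩
  haveI : Nonempty {j // j ∈ J} := ⟨⟨r, hr⟩⟩
  have huniv : (Finset.univ : Finset (V × {j // j ∈ J})).Nonempty := Finset.univ_nonempty
  set K : ℝ := Finset.univ.sup' huniv (fun vj : V × {j // j ∈ J} => |d vj.1 vj.2|) with hK
  have hKb : ∀ v j, |d v j| ≤ K := fun v j =>
    Finset.le_sup' (fun vj : V × {j // j ∈ J} => |d vj.1 vj.2|) (Finset.mem_univ (v, j))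
  have hK0 : 0 ≤ K := le_trans (abs_nonneg _) (hKb r ⟨r, hr⟩)
  set T : Finset ℝ := insert 1
    ((((Finset.univ : Finset (V × {j // j ∈ J})).image (fun vj => x vj.1 vj.2)) ∪
      ((Finset.univ : Finset (V × {j // j ∈ J})).image
        (fun vj => x (nxt hc vj.1 vj.2.1) vj.2 - x vj.1 vj.2))).filter (fun t => 0 < t)) with hT
  have hTne : T.Nonempty := ⟨1, Finset.mem_insert_self 1 _⟩
  set M : ℝ := T.min' hTne with hM
  have hM0 : 0 < M := by
    have hmem : M ∈ T := Finset.min'_mem T hTne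
    rcases Finset.mem_insert.1 hmem with h | h
    · rw [h]; norm_num
    · exact (Finset.mem_filter.1 h).2
  have hM1 : ∀ v j, x v j ≠ 0 → M ≤ x v j := by
    intro v j hne
    apply Finset.min'_le
    apply Finset.mem_insert_of_mem
    rw [Finset.mem_filter]
    constructor
    · apply Finset.mem_union_left
      exact Finset.mem_image.2 ⟨(v, j), Finset.mem_univ _, rfl⟩
    · exact lt_of_le_of_ne (hx.1 v j) (Ne.symm hne)
  have hM2 : ∀ v (hv : v ∉ J) j, x v j ≠ x (nxt hc v j.1) j →
      M ≤ x (nxt hc v j.1) j - x v j := by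
    intro v hv j hne
    apply Finset.min'_le
    apply Finset.mem_insert_of_mem
    rw [Finset.mem_filter]
    constructor
    · apply Finset.mem_union_right
      exact Finset.mem_image.2 ⟨(v, j), Finset.mem_univ _, rfl⟩
    · have := hx.2.2.2.2 v hv j
      cases lt_or_eq_of_le this with
      | inl h => linarith
      | inr h => exact absurd h hne
  set ε : ℝ := M / (2 * (K + 1)) with hε
  have hε0 : 0 < ε := by
    rw [hε]
    positivity
  have hεK : ε * K ≤ M / 2 := by
    rw [hε, div_mul_eq_mul_div, div_le_div_iff₀ (by positivity) (by norm_num)]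
    nlinarith [hM0, hK0]
  have hfeas : ∀ c : ℝ, |c| ≤ ε → Feas hc J (fun v j => x v j + c * d v j) := by
    intro c hcb
    have habs : ∀ v j, |c * d v j| ≤ M / 2 := by
      intro v j
      rw [abs_mul]
      calc |c| * |d v j| ≤ ε * K :=
            mul_le_mul hcb (hKb v j) (abs_nonneg _) (le_of_lt hε0)
        _ ≤ M / 2 := hεK
    refine ⟨?_, ?_, ?_, ?_, ?_⟩
    · intro v j
      show 0 ≤ x v j + c * d v j
      by_cases h0 : x v j = 0
      · rw [h0, hdsupp v j (fun hf2 => by have := hf2.1; rw [h0] at this; exact lt_irrefl _ this)]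
        norm_num
      · have h1 := hM1 v j h0
        have h2 := abs_le.1 (habs v j)
        linarith
    · intro j
      show x j.1 j + c * d j.1 j = 1
      have h1 := hx.2.1 j
      have h2 : d j.1 j = 0 := hdsupp _ j (fun hf2 => by have := hf2.2; rw [h1] at this; exact lt_irrefl _ this)
      simp only [h1, h2]
      ring
    · intro j j' hne
      show x j.1 j' + c * d j.1 j' = 0
      have h1 := hx.2.2.1 j j' hne
      have h2 : d j.1 j' = 0 := hdsupp _ j' (fun hf2 => by have := hf2.1; rw [h1] at this; exact lt_irrefl _ this)
      simp only [h1, h2]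
      ring
    · intro v hv
      show ∑ j, (x v j + c * d v j) = 1
      rw [Finset.sum_add_distrib, hx.2.2.2.1 v hv, ← Finset.mul_sum, hdsum v]
      ring
    · intro v hv j
      show x v j + c * d v j ≤ x (nxt hc v j.1) j + c * d (nxt hc v j.1) j
      by_cases heq : x v j = x (nxt hc v j.1) j
      · rw [heq, hdtight v hv j heq]
      · have h1 := hM2 v hv j heq
        have h2 := abs_le.1 (habs v j)
        have h3 := abs_le.1 (habs (nxt hc v j.1) j)
        linarith
  refine ⟨fun v j => x v j + ε * d v j, fun v j => x v j + (-ε) * d v j,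
    hfeas ε (by rw [abs_of_pos hε0]), hfeas (-ε) (by rw [abs_neg, abs_of_pos hε0]), ?_, ?_⟩
  · intro hyz
    apply hdne
    funext v j
    have : x v j + ε * d v j = x v j + (-ε) * d v j := congrFun (congrFun hyz v) j
    have hd0 : ε * d v j = - (ε * d v j) := by linarith
    have : ε * d v j = 0 := by linarith
    have := mul_eq_zero.1 this
    rcases this with h | h
    · exact absurd h (ne_of_gt hε0)
    · exact h
  · funext v j
    simp only [Pi.smul_apply, Pi.add_apply, smul_eq_mul]
    ring

end Main
end TPI

/-- (Lemma 1: integrality of the tree-partitioning formulation.) -/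
theorem tree_partition_integrality {V : Type*} [Fintype V] [DecidableEq V]
    (G : SimpleGraph V) (hGconn : G.Connected) (hGacyc : G.IsAcyclic)
    (J : Finset V) (hJ : J.Nonempty)
    (P : Set (V → {j // j ∈ J} → ℝ))
    (hP : P = {x | (∀ v j, 0 ≤ x v j) ∧
      (∀ j : {j // j ∈ J}, x j.1 j = 1) ∧
      (∀ j j' : {j // j ∈ J}, j ≠ j' → x j.1 j' = 0) ∧
      (∀ v, v ∉ J → ∑ j, x v j = 1) ∧
      (∀ v, v ∉ J → ∀ j : {j // j ∈ J}, ∀ w : G.Walk v j.1, w.IsPath →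
        x v j ≤ x (w.getVert 1) j)}) :
    ∀ x ∈ P, (¬ ∃ y ∈ P, ∃ z ∈ P, y ≠ z ∧ x = (1 / 2 : ℝ) • (y + z)) →
      ∀ v j, x v j = 0 ∨ x v j = 1 := by
  classical
  have hmemP : ∀ x : V → {j // j ∈ J} → ℝ, x ∈ P ↔ TPI.Feas hGconn J x := by
    intro x
    rw [hP]
    simp only [Set.mem_setOf_eq]
    constructor
    · rintro ⟨h1, h2, h3, h4, h5⟩
      exact ⟨h1, h2, h3, h4, fun v hv j =>
        h5 v hv j (TPI.p0 hGconn v j.1) (TPI.p0_isPath hGconn v j.1)⟩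
    · rintro ⟨h1, h2, h3, h4, h5⟩
      refine ⟨h1, h2, h3, h4, fun v hv j w hw => ?_⟩
      rw [TPI.walk_eq_p0 hGconn hGacyc w hw]
      exact h5 v hv j
  intro x hxP hext v j
  have hFeas : TPI.Feas hGconn J x := (hmemP x).1 hxP
  obtain ⟨r, hr⟩ := hJ
  by_contra hcon
  push_neg at hcon
  obtain ⟨h0, h1⟩ := hcon
  have hfrac : TPI.frp J x v j := by
    constructor
    · exact lt_of_le_of_ne (hFeas.1 v j) (Ne.symm h0)
    · by_cases hvJ : v ∈ J
      · rcases TPI.root_row hFeas hvJ j with h | h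
        · exact absurd h h0
        · exact absurd h h1
      · exact lt_of_le_of_ne (TPI.row_le_one hFeas hvJ j) h1
  obtain ⟨y, z, hy, hz, hne, hmid⟩ :=
    TPI.midpoint_of_frac (ha := hGacyc) hr hFeas hfrac
  exact hext ⟨y, (hmemP y).2 hy, z, (hmemP z).2 hz, hne, hmid⟩
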